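/- arXiv:1512.06667 — 6 statements merged into one kernel-verified Lean document; each statement's English description precedes it below -/
import Mathlib

section
/- Let G = I - α v vᵀ be an n×n positive-definite matrix where v ∈ ℝⁿ has unit norm and 0 ≤ α < 1. If a* ∈ ℤⁿ \ {0} minimizes aᵀ G a over nonzero integer vectors, then either there exists x ∈ ℝ such that a* - (1/2)·𝟙 < v·x < a* + (1/2)·𝟙 componentwise (hence a* = ⌈v·x⌋, the componentwise nearest integer), or a* equals ± a standard unit vector. -/
open Matrix BigOperators

theorem stmt_0 {n : ℕ} (v : Fin n → ℝ) (hv : ∑ i, v i ^ 2 = 1)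
    (α : ℝ) (hα0 : 0 ≤ α) (hα1 : α < 1)
    (G : Matrix (Fin n) (Fin n) ℝ)
    (hG : G = 1 - α • Matrix.vecMulVec v v) (hGpd : G.PosDef)
    (a : Fin n → ℤ) (ha : a ≠ 0)
    (hmin : ∀ b : Fin n → ℤ, b ≠ 0 →
      (fun i => (a i : ℝ)) ⬝ᵥ G.mulVec (fun i => (a i : ℝ)) ≤
      (fun i => (b i : ℝ)) ⬝ᵥ G.mulVec (fun i => (b i : ℝ))) :
    (∃ x : ℝ, (∀ i, (a i : ℝ) - 1/2 < v i * x ∧ v i * x < (a i : ℝ) + 1/2) ∧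
      ∀ i, a i = round (v i * x)) ∨
    (∃ j : Fin n, a = Pi.single j 1 ∨ a = -Pi.single j 1) := by
  classical
  by_cases hcase : ∃ j : Fin n, a = Pi.single j 1 ∨ a = -Pi.single j 1
  · exact Or.inr hcase
  push_neg at hcase
  left
  set A : Fin n → ℝ := fun i => (a i : ℝ) with hA
  set t : ℝ := ∑ i, v i * A i with ht
  -- the quadratic form
  have quad : ∀ c : Fin n → ℝ, c ⬝ᵥ G.mulVec c
      = (∑ i, c i ^ 2) - α * (∑ i, v i * c i) ^ 2 := by
    intro c
    have hm : ∀ i, G.mulVec c i = c i - α * v i * ∑ j, v j * c j := by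
      intro i
      simp only [hG, Matrix.mulVec, dotProduct, Matrix.sub_apply, Matrix.one_apply,
        Matrix.smul_apply, Matrix.vecMulVec_apply, smul_eq_mul, sub_mul, ite_mul, one_mul,
        zero_mul, Finset.sum_sub_distrib, Finset.sum_ite_eq, Finset.mem_univ, if_true,
        Finset.mul_sum]
      ring_nf
    simp only [dotProduct, hm]
    have : ∀ i, c i * (c i - α * v i * ∑ j, v j * c j)
        = c i ^ 2 - α * (∑ j, v j * c j) * (v i * c i) := by intro i; ring
    rw [Finset.sum_congr rfl fun i _ => this i, Finset.sum_sub_distrib, ← Finset.mul_sum]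
    ring
  -- key inequality
  have key : ∀ i : Fin n, 2 * |A i - α * t * v i| ≤ 1 - α * v i ^ 2 := by
    intro i
    set s : ℝ := if 0 ≤ A i - α * t * v i then 1 else -1 with hs
    set si : ℤ := if 0 ≤ A i - α * t * v i then 1 else -1 with hsi
    have hsc : (si : ℝ) = s := by
      by_cases h : 0 ≤ A i - α * t * v i <;> simp [hs, hsi, h]
    have hs2 : s ^ 2 = 1 := by
      by_cases h : 0 ≤ A i - α * t * v i <;> simp [hs, h]
    set b : Fin n → ℤ := a - Pi.single i si with hb
    have hbne : b ≠ 0 := by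
      intro h0
      have hab : a = Pi.single i si := by
        funext j
        have := congrFun h0 j
        simpa [hb, sub_eq_zero] using this
      by_cases h : 0 ≤ A i - α * t * v i
      · exact (hcase i).1 (by rw [hab, hsi, if_pos h])
      · refine (hcase i).2 ?_
        rw [hab, hsi, if_neg h]
        funext j
        simp [Pi.single_apply]
        split <;> simp
    have hmb := hmin b hbne
    rw [quad, quad] at hmb
    have hBj : ∀ j, ((b j : ℝ)) = A j - (if j = i then s else 0) := by
      intro j
      simp only [hb, Pi.sub_apply, Int.cast_sub, Pi.single_apply]
      by_cases h : j = i <;> simp [h, hsc] <;> rfl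
    have e1 : (∑ j, ((b j : ℝ)) ^ 2) = (∑ j, A j ^ 2) - (2 * s * A i - s ^ 2) := by
      have : ∀ j, ((b j : ℝ)) ^ 2 = A j ^ 2 - (if j = i then 2 * s * A j - s ^ 2 else 0) := by
        intro j
        rw [hBj j]
        by_cases h : j = i <;> simp [h] <;> ring
      rw [Finset.sum_congr rfl fun j _ => this j, Finset.sum_sub_distrib,
        Finset.sum_ite_eq' Finset.univ i (fun j => 2 * s * A j - s ^ 2)]
      simp
    have e2 : (∑ j, v j * (b j : ℝ)) = t - s * v i := by
      have : ∀ j, v j * (b j : ℝ) = v j * A j - (if j = i then s * v j else 0) := by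
        intro j
        rw [hBj j]
        by_cases h : j = i <;> simp [h] <;> ring
      rw [Finset.sum_congr rfl fun j _ => this j, Finset.sum_sub_distrib,
        Finset.sum_ite_eq' Finset.univ i (fun j => s * v j)]
      simp [ht]
    rw [e1, e2] at hmb
    have habs : s * (A i - α * t * v i) = |A i - α * t * v i| := by
      by_cases h : 0 ≤ A i - α * t * v i
      · rw [abs_of_nonneg h]; simp [hs, h]
      · rw [abs_of_neg (lt_of_not_ge h)]; simp [hs, h]
    have hexp : α * (t - s * v i) ^ 2 = α * t ^ 2 - 2 * α * t * s * v i + α * v i ^ 2 := by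
      have h' : (t - s * v i) ^ 2 = t ^ 2 - 2 * t * s * v i + s ^ 2 * v i ^ 2 := by ring
      rw [h', hs2]; ring
    rw [← ht, hexp] at hmb
    have habs' : s * A i - s * (α * t * v i) = |A i - α * t * v i| := by
      rw [← habs]; ring
    linarith [hmb, hs2, habs']
  -- dispatch α = 0
  rcases eq_or_lt_of_le hα0 with hα | hαpos
  · exfalso
    apply ha
    funext i
    have := key i
    rw [← hα] at this
    simp only [zero_mul, sub_zero, mul_zero] at this
    have h1 : |(a i : ℝ)| < 1 := by
      have : |A i| ≤ 1/2 := by linarith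
      calc |(a i : ℝ)| = |A i| := rfl
        _ ≤ 1/2 := this
        _ < 1 := by norm_num
    have : |a i| < 1 := by exact_mod_cast (by push_cast; simpa using h1 : (|a i| : ℝ) < 1)
    simpa using Int.abs_lt_one_iff.mp this
  -- main case: x = α t
  have hbound : ∀ i, (a i : ℝ) - 1/2 < v i * (α * t) ∧ v i * (α * t) < (a i : ℝ) + 1/2 := by
    intro i
    by_cases hvi : v i = 0
    · have := key i
      rw [hvi] at this
      simp only [mul_zero, sub_zero] at this
      have h1 : |A i| ≤ 1/2 := by linarith [this]
      have h2 : |(a i : ℝ)| < 1 := lt_of_le_of_lt h1 (by norm_num)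
      have : |a i| < 1 := by exact_mod_cast (by push_cast; simpa using h2 : (|a i| : ℝ) < 1)
      have hai : a i = 0 := Int.abs_lt_one_iff.mp this
      constructor <;> · rw [hvi, hai] <;> norm_num
    · have hpos : 0 < α * v i ^ 2 := by positivity
      have := key i
      have habs : |A i - α * t * v i| < 1/2 := by linarith [abs_nonneg (A i - α * t * v i)]
      rw [abs_lt] at habs
      constructor
      · have : A i - 1/2 < α * t * v i := by linarith [habs.2]
        calc (a i : ℝ) - 1/2 = A i - 1/2 := rfl
          _ < α * t * v i := this
          _ = v i * (α * t) := by ring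
      · have : α * t * v i < A i + 1/2 := by linarith [habs.1]
        calc v i * (α * t) = α * t * v i := by ring
          _ < A i + 1/2 := this
          _ = (a i : ℝ) + 1/2 := rfl
  refine ⟨α * t, hbound, ?_⟩
  intro i
  obtain ⟨h1, h2⟩ := hbound i
  rw [round_eq, eq_comm, Int.floor_eq_iff]
  constructor
  · push_cast; linarith
  · push_cast; linarith
end

section
/- Let G = I - V Vᵀ be positive definite, where V ∈ ℝ^{n×k}. If a* ∈ ℤⁿ \ {0} minimizes aᵀ G a over nonzero integer vectors, then either there exists x ∈ ℝᵏ such that a* - (1/2)·𝟙 < V x < a* + (1/2)·𝟙 componentwise (hence a* = ⌈V x⌋), or a* is ± a standard unit vector. -/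
open Matrix BigOperators

theorem stmt_4 {n k : ℕ} (V : Matrix (Fin n) (Fin k) ℝ)
    (G : Matrix (Fin n) (Fin n) ℝ)
    (hG : G = 1 - V * Vᵀ) (hGpd : G.PosDef)
    (a : Fin n → ℤ) (ha : a ≠ 0)
    (hmin : ∀ b : Fin n → ℤ, b ≠ 0 →
      (fun i => (a i : ℝ)) ⬝ᵥ G.mulVec (fun i => (a i : ℝ)) ≤
      (fun i => (b i : ℝ)) ⬝ᵥ G.mulVec (fun i => (b i : ℝ))) :
    (∃ x : Fin k → ℝ, (∀ i, (a i : ℝ) - 1/2 < V.mulVec x i ∧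
        V.mulVec x i < (a i : ℝ) + 1/2) ∧
      ∀ i, a i = round (V.mulVec x i)) ∨
    (∃ j : Fin n, a = Pi.single j 1 ∨ a = -Pi.single j 1) := by
  classical
  set aR : Fin n → ℝ := fun i => (a i : ℝ) with haR
  set x : Fin k → ℝ := Vᵀ.mulVec aR with hx
  have hGsym : Gᵀ = G := by
    simp [hG, transpose_sub, transpose_mul, transpose_one, transpose_transpose]
  have hVx : V.mulVec x = (V * Vᵀ).mulVec aR := by
    rw [hx, mulVec_mulVec]
  have hu : ∀ i, G.mulVec aR i = aR i - V.mulVec x i := by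
    intro i
    rw [hG, hVx]
    simp [sub_mulVec]
  by_cases hall : ∀ i, |aR i - V.mulVec x i| < 1/2
  · left
    refine ⟨x, fun i => ?_, fun i => ?_⟩
    · have h := abs_sub_lt_iff.mp (hall i)
      constructor <;> linarith [h.1, h.2]
    · have h := abs_sub_lt_iff.mp (hall i)
      simp only [haR] at h
      rw [round_eq]
      symm
      rw [Int.floor_eq_iff]
      refine ⟨by linarith [h.1], by push_cast; linarith [h.2]⟩
  · right
    push_neg at hall
    obtain ⟨i, hi⟩ := hall
    have hui : 1/2 ≤ |G.mulVec aR i| := by rw [hu i]; exact hi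
    set s : ℤ := if 0 ≤ G.mulVec aR i then 1 else -1 with hs
    have hsabs : (s : ℝ) * G.mulVec aR i = |G.mulVec aR i| := by
      rw [hs]
      by_cases h : 0 ≤ G.mulVec aR i
      · simp [h, abs_of_nonneg h]
      · simp [h, abs_of_neg (lt_of_not_ge h)]
    have hs2 : (s : ℝ) * (s : ℝ) = 1 := by
      rw [hs]; by_cases h : 0 ≤ G.mulVec aR i <;> simp [h]
    set bZ : Fin n → ℤ := a - s • Pi.single i 1 with hbZ
    by_cases hb0 : bZ = 0
    · refine ⟨i, ?_⟩
      have hae : a = s • Pi.single i 1 := by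
        have := sub_eq_zero.mp hb0
        exact this
      rw [hs] at hae
      by_cases h : 0 ≤ G.mulVec aR i
      · left; simpa [h] using hae
      · right
        simp only [h, if_false] at hae
        rw [hae]; ext j; simp
    · exfalso
      have hmb := hmin bZ hb0
      have hcast : (fun j => (bZ j : ℝ)) = aR - (s : ℝ) • (Pi.single i 1 : Fin n → ℝ) := by
        funext j
        rw [hbZ]
        by_cases h : j = i <;> simp [h, Pi.single_apply] <;> push_cast <;> ring
      -- expand the quadratic form at bZ
      have hexp : (fun j => (bZ j : ℝ)) ⬝ᵥ G.mulVec (fun j => (bZ j : ℝ)) =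
          aR ⬝ᵥ G.mulVec aR - 2 * |G.mulVec aR i| + G i i := by
        rw [hcast]
        rw [mulVec_sub, mulVec_smul]
        rw [sub_dotProduct, dotProduct_sub, dotProduct_sub, smul_dotProduct,
          smul_dotProduct, dotProduct_smul, dotProduct_smul]
        have h1 : aR ⬝ᵥ G.mulVec (Pi.single i 1) = G.mulVec aR i := by
          rw [dotProduct_mulVec, ← mulVec_transpose, hGsym]
          simp [dotProduct_single]
        have h2 : Pi.single i (1:ℝ) ⬝ᵥ G.mulVec aR = G.mulVec aR i := by
          simp [single_dotProduct]
        have h3 : Pi.single i (1:ℝ) ⬝ᵥ G.mulVec (Pi.single i 1) = G i i := by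
          rw [mulVec_single]
          simp [single_dotProduct]
        rw [h1, h2, h3]
        simp only [smul_eq_mul]
        rw [← hsabs]
        have hs2' : (s:ℝ)^2 = 1 := by nlinarith [hs2]
        ring_nf
        linear_combination (G i i) * hs2'
      rw [hexp] at hmb
      -- hence 2 |(G a)_i| ≤ G i i
      have hGii : G i i = 1 - ∑ j, V i j * V i j := by
        rw [hG]
        simp [Matrix.sub_apply, one_apply, mul_apply]
      have hPnn : 0 ≤ ∑ j, V i j * V i j :=
        Finset.sum_nonneg fun j _ => mul_self_nonneg _
      have h2u : 2 * |G.mulVec aR i| ≤ G i i := by linarith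
      have hP0 : ∑ j, V i j * V i j = 0 := by
        rw [hGii] at h2u
        linarith
      have hV0 : ∀ j, V i j = 0 := by
        intro j
        have := (Finset.sum_eq_zero_iff_of_nonneg
          (fun j _ => mul_self_nonneg (V i j))).mp hP0 j (Finset.mem_univ j)
        nlinarith [this]
      have hVx0 : V.mulVec x i = 0 := by
        simp [mulVec, dotProduct, hV0]
      have hdi : G.mulVec aR i = aR i := by rw [hu i, hVx0, sub_zero]
      have hGii1 : G i i ≤ 1 := by rw [hGii]; linarith
      have hai : |aR i| ≤ 1/2 := by
        rw [hdi] at h2u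
        linarith
      have : a i = 0 := by
        by_contra h0
        have h1 : (1:ℝ) ≤ |aR i| := by
          rw [haR]
          simp only
          rw [← Int.cast_abs]
          exact_mod_cast Int.one_le_abs h0
        linarith
      rw [hdi] at hui
      rw [haR] at hui
      simp [this] at hui
      linarith
end

section
/- Let G = D - V Vᵀ be positive definite, where D is diagonal with positive diagonal entries and V ∈ ℝ^{n×k}. If a* ∈ ℤⁿ \ {0} minimizes aᵀ G a, then either there exists x ∈ ℝᵏ with a* - (1/2)·𝟙 < D⁻¹ V x < a* + (1/2)·𝟙 (hence a* = ⌈D⁻¹ V x⌋), or a* is ± a standard unit vector. -/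
open Matrix BigOperators

theorem stmt_5 {n k : ℕ} (V : Matrix (Fin n) (Fin k) ℝ)
    (d : Fin n → ℝ) (hd : ∀ i, 0 < d i)
    (G : Matrix (Fin n) (Fin n) ℝ)
    (hG : G = Matrix.diagonal d - V * Vᵀ) (hGpd : G.PosDef)
    (a : Fin n → ℤ) (ha : a ≠ 0)
    (hmin : ∀ b : Fin n → ℤ, b ≠ 0 →
      (fun i => (a i : ℝ)) ⬝ᵥ G.mulVec (fun i => (a i : ℝ)) ≤
      (fun i => (b i : ℝ)) ⬝ᵥ G.mulVec (fun i => (b i : ℝ))) :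
    (∃ x : Fin k → ℝ, (∀ i, (a i : ℝ) - 1/2 < (d i)⁻¹ * V.mulVec x i ∧
        (d i)⁻¹ * V.mulVec x i < (a i : ℝ) + 1/2) ∧
      ∀ i, a i = round ((d i)⁻¹ * V.mulVec x i)) ∨
    (∃ j : Fin n, a = Pi.single j 1 ∨ a = -Pi.single j 1) := by
  classical
  set av : Fin n → ℝ := fun i => (a i : ℝ) with hav
  set x : Fin k → ℝ := Vᵀ *ᵥ av with hx
  -- symmetry of G
  have hGt : Gᵀ = G := by
    rw [hG]; simp [Matrix.transpose_sub, Matrix.transpose_mul,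
      Matrix.diagonal_transpose]
  have hsym : ∀ v w : Fin n → ℝ, v ⬝ᵥ G *ᵥ w = w ⬝ᵥ G *ᵥ v := by
    intro v w
    calc v ⬝ᵥ G *ᵥ w = (v ᵥ* G) ⬝ᵥ w := Matrix.dotProduct_mulVec v G w
      _ = (Gᵀ *ᵥ v) ⬝ᵥ w := by rw [Matrix.mulVec_transpose]
      _ = (G *ᵥ v) ⬝ᵥ w := by rw [hGt]
      _ = w ⬝ᵥ G *ᵥ v := dotProduct_comm _ _
  have hGav : ∀ i, (G *ᵥ av) i = d i * av i - (V *ᵥ x) i := by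
    intro i
    rw [hG, Matrix.sub_mulVec]
    simp [hx, Matrix.mulVec_diagonal, Matrix.mulVec_mulVec]
  by_cases hcase : ∀ i, (a i : ℝ) - 1/2 < (d i)⁻¹ * (V *ᵥ x) i ∧
      (d i)⁻¹ * (V *ᵥ x) i < (a i : ℝ) + 1/2
  · left
    refine ⟨x, hcase, fun i => ?_⟩
    obtain ⟨h1, h2⟩ := hcase i
    rw [round_eq]
    have : (a i : ℝ) ≤ (d i)⁻¹ * (V *ᵥ x) i + 1/2 := by linarith
    symm
    rw [Int.floor_eq_iff]
    constructor <;> push_cast <;> linarith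
  · right
    push_neg at hcase
    obtain ⟨i, hi⟩ := hcase
    set s : ℝ := d i * av i - (V *ᵥ x) i with hs
    have hdi := hd i
    have hsbig : d i / 2 ≤ |s| := by
      rcases le_or_gt ((d i)⁻¹ * (V *ᵥ x) i) ((a i : ℝ) - 1/2) with h | h
      · -- (V x) i ≤ d i * (a i - 1/2), so s ≥ d i / 2
        have hv : (V *ᵥ x) i ≤ d i * ((a i : ℝ) - 1/2) := by
          have := mul_le_mul_of_nonneg_left h (le_of_lt hdi)
          rwa [mul_inv_cancel_left₀ (ne_of_gt hdi)] at this
        have : d i / 2 ≤ s := by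
          simp only [hs, hav]; nlinarith
        calc d i / 2 ≤ s := this
          _ ≤ |s| := le_abs_self s
      · have h2 := hi h
        have hv : d i * ((a i : ℝ) + 1/2) ≤ (V *ᵥ x) i := by
          have := mul_le_mul_of_nonneg_left h2 (le_of_lt hdi)
          rwa [mul_inv_cancel_left₀ (ne_of_gt hdi)] at this
        have hneg : s ≤ -(d i / 2) := by
          simp only [hs, hav]; nlinarith
        calc d i / 2 ≤ -s := by linarith
          _ ≤ |s| := neg_le_abs s
    set t : ℤ := if 0 < s then -1 else 1 with ht
    have hts : (t : ℝ) * s ≤ -(d i / 2) := by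
      rcases lt_or_ge 0 s with hpos | hle
      · rw [ht, if_pos hpos]; push_cast
        rw [abs_of_pos hpos] at hsbig; linarith
      · rw [ht, if_neg (not_lt.mpr hle)]; push_cast
        rw [abs_of_nonpos hle] at hsbig; linarith
    set b : Fin n → ℤ := a + t • Pi.single i 1 with hb
    set bv : Fin n → ℝ := av + (t : ℝ) • (Pi.single i 1 : Fin n → ℝ) with hbv
    clear_value s t
    have hbcast : (fun j => ((b j : ℤ) : ℝ)) = bv := by
      funext j
      simp only [hb, hbv, Pi.add_apply, Pi.smul_apply, smul_eq_mul, hav]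
      by_cases hj : j = i
      · subst hj; simp
      · simp [Pi.single_eq_of_ne hj]
    -- expand quadratic
    have he1 : (Pi.single i (1:ℝ)) ⬝ᵥ G *ᵥ av = (G *ᵥ av) i := by
      rw [single_dotProduct, one_mul]
    have he2 : av ⬝ᵥ G *ᵥ (Pi.single i (1:ℝ)) = (G *ᵥ av) i := by
      rw [hsym]; exact he1
    have he3 : (Pi.single i (1:ℝ)) ⬝ᵥ G *ᵥ (Pi.single i (1:ℝ)) = G i i := by
      simp [single_dotProduct, Matrix.mulVec_single]
    have hexp : bv ⬝ᵥ G *ᵥ bv = av ⬝ᵥ G *ᵥ av + 2 * ((t:ℝ) * (G *ᵥ av) i)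
        + (t:ℝ)^2 * G i i := by
      simp only [hbv, add_dotProduct, dotProduct_add,
        Matrix.mulVec_add, Matrix.mulVec_smul, smul_dotProduct,
        dotProduct_smul, smul_eq_mul, he1, he2, he3]
      ring
    have ht2 : (t:ℝ)^2 = 1 := by
      rcases lt_or_ge 0 s with hpos | hle
      · rw [ht, if_pos hpos]; norm_num
      · rw [ht, if_neg (not_lt.mpr hle)]; norm_num
    have hGii : G i i ≤ d i := by
      rw [hG]
      have : (0:ℝ) ≤ (V * Vᵀ) i i := by
        rw [Matrix.mul_apply]
        apply Finset.sum_nonneg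
        intro j _
        simp only [Matrix.transpose_apply]
        exact mul_self_nonneg _
      simp only [Matrix.sub_apply, Matrix.diagonal_apply_eq]
      linarith
    have hGavi : (G *ᵥ av) i = s := (hGav i).trans hs.symm
    -- now b must be zero
    have hbz : b = 0 := by
      by_contra hbnz
      have hmb := hmin b hbnz
      rw [hbcast] at hmb
      rw [hexp, hGavi, ht2, one_mul] at hmb
      -- 0 ≤ 2 t s + G i i,  2 t s ≤ -d i, G i i ≤ d i, so all equalities
      have h1 : 0 ≤ 2 * ((t:ℝ) * s) + G i i := by linarith
      have h2 : 2 * ((t:ℝ) * s) ≤ -(d i) := by linarith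
      have hGeq : G i i = d i := by linarith
      have hts2 : 2 * ((t:ℝ) * s) = -(d i) := by linarith
      -- G i i = d i forces row i of V to vanish
      have hrow : ∀ j, V i j = 0 := by
        intro j
        have hsum : ∑ l, V i l * V i l = 0 := by
          rw [hG] at hGeq
          simp only [Matrix.sub_apply, Matrix.diagonal_apply_eq,
            Matrix.mul_apply, Matrix.transpose_apply] at hGeq
          linarith
        have := Finset.sum_eq_zero_iff_of_nonneg
          (fun l _ => mul_self_nonneg (V i l)) |>.mp hsum j (Finset.mem_univ j)
        exact mul_self_eq_zero.mp this
      have hVx : (V *ᵥ x) i = 0 := by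
        simp only [Matrix.mulVec, dotProduct]
        exact Finset.sum_eq_zero (fun j _ => by rw [hrow j, zero_mul])
      have hseq : s = d i * a i := by rw [hs, hVx, sub_zero]
      rw [hseq] at hts2
      have hdne : d i ≠ 0 := ne_of_gt hdi
      have hkey : d i * (2 * (t:ℝ) * (a i)) = d i * (-1) := by
        linear_combination hts2
      have hreal : 2 * (t:ℝ) * (a i) = -1 := mul_left_cancel₀ hdne hkey
      have hint : (2 * t * a i : ℤ) = -1 := by
        have : ((2 * t * a i : ℤ) : ℝ) = ((-1 : ℤ) : ℝ) := by
          push_cast; linarith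
        exact_mod_cast this
      have hdvd : (2:ℤ) ∣ -1 := ⟨t * a i, by linear_combination -hint⟩
      norm_num at hdvd
    -- b = 0 means a = -t • single
    refine ⟨i, ?_⟩
    have haeq : a = (-t) • Pi.single i 1 := by
      funext j
      have hzj := congrFun hbz j
      simp only [hb, Pi.add_apply, Pi.smul_apply, smul_eq_mul,
        Pi.zero_apply] at hzj
      simp only [Pi.smul_apply, smul_eq_mul]
      by_cases hj : j = i
      · subst hj
        simp only [Pi.single_eq_same, mul_one] at hzj ⊢
        omega
      · simp only [Pi.single_eq_of_ne hj, mul_zero] at hzj ⊢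
        omega
    rcases lt_or_ge 0 s with hpos | hle
    · left
      rw [haeq, ht, if_pos hpos]; simp
    · right
      rw [haeq, ht, if_neg (not_lt.mpr hle)]
      funext j; simp
end

section
/- Let G be positive definite, y ∈ ℝⁿ, z = Aᵀy where AᵀA = G, and define f(a) = aᵀ G a - 2 zᵀ a + yᵀy. If a* ∈ ℤⁿ minimizes f over ℤⁿ, then for every index j, a*_j is a nearest integer to (z_j + Σ_{i≠j} (-G_{ij}) a*_i) / G_{jj}, i.e., a*_j ∈ {⌈r_j⌋, ⌊r_j⌉} where r_j = (z_j - Σ_{i≠j} G_{ij} a*_i)/G_{jj}. -/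
open Matrix BigOperators

lemma near_aux (α c : ℝ) (aj : ℤ) (hα : 0 < α)
    (h1 : 0 ≤ α * (2 * aj + 1) - 2 * c) (h2 : 0 ≤ α * (1 - 2 * aj) + 2 * c) :
    aj = round (c / α) ∨ aj = -round (-(c / α)) := by
  set r := c / α with hr
  have hc : c = r * α := by rw [hr, div_mul_cancel₀ _ hα.ne']
  have hr1 : r ≤ (aj : ℝ) + 1 / 2 := by nlinarith
  have hr2 : (aj : ℝ) - 1 / 2 ≤ r := by nlinarith
  rcases lt_or_eq_of_le hr1 with h | h
  · left
    rw [round_eq]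
    symm
    rw [Int.floor_eq_iff]
    constructor <;> push_cast <;> linarith
  · right
    have h3 : -r + 1 / 2 = ((-aj : ℤ) : ℝ) := by push_cast; linarith
    rw [round_eq, h3, Int.floor_intCast]
    ring

/-- ⌈·⌋ is `round` (half-integers up); ⌊·⌉ (half-integers down) is `-round (-x)`. -/
theorem stmt_13 {n : ℕ} (A G : Matrix (Fin n) (Fin n) ℝ)
    (hG : G = Aᵀ * A) (hGpd : G.PosDef)
    (y z : Fin n → ℝ) (hz : z = Aᵀ.mulVec y)
    (f : (Fin n → ℤ) → ℝ)
    (hf : f = fun b => (fun i => (b i : ℝ)) ⬝ᵥ G.mulVec (fun i => (b i : ℝ)) -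
      2 * (z ⬝ᵥ fun i => (b i : ℝ)) + y ⬝ᵥ y)
    (a : Fin n → ℤ) (hmin : ∀ b : Fin n → ℤ, f a ≤ f b) :
    ∀ j : Fin n,
      a j = round ((z j - ∑ i ∈ Finset.univ.erase j, G j i * (a i : ℝ)) / G j j) ∨
      a j = -round (-((z j - ∑ i ∈ Finset.univ.erase j, G j i * (a i : ℝ)) / G j j)) := by
  intro j
  have hsym : ∀ i k, G i k = G k i := by
    intro i k
    have := hGpd.isHermitian.apply k i
    simpa using this
  set u : Fin n → ℝ := fun i => (a i : ℝ) with hu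
  set S : ℝ := ∑ i ∈ Finset.univ.erase j, G j i * (a i : ℝ) with hS
  have hGjj : 0 < G j j := hGpd.diag_pos
  -- difference formula
  have hdiff : ∀ δ : ℤ, f (Function.update a j (a j + δ)) - f a =
      2 * δ * (G j j * a j + S) + δ ^ 2 * G j j - 2 * δ * z j := by
    intro δ
    have hcast : (fun i => ((Function.update a j (a j + δ)) i : ℝ)) =
        u + Pi.single j (δ : ℝ) := by
      funext i
      by_cases h : i = j
      · subst h
        simp only [Function.update_self, Pi.add_apply, Pi.single_eq_same, hu]
        push_cast; ring
      · simp [Function.update_of_ne h, Pi.single_apply, h, hu]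
    have hGu : ∑ i, G j i * u i = G j j * a j + S := by
      rw [hS, hu, ← Finset.add_sum_erase _ _ (Finset.mem_univ j)]
    have huGw : u ⬝ᵥ G.mulVec (Pi.single j (δ : ℝ)) = δ * (G j j * a j + S) := by
      rw [mulVec_single, ← hGu]
      simp only [dotProduct]
      rw [Finset.mul_sum]
      congr 1; funext i
      simp only [Pi.smul_apply, col_apply, op_smul_eq_mul]
      rw [hsym i j]; ring
    have hwGu : (Pi.single j (δ : ℝ)) ⬝ᵥ G.mulVec u = δ * (G j j * a j + S) := by
      rw [single_dotProduct, mulVec, dotProduct, Finset.mul_sum, ← hGu, Finset.mul_sum]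
    have hwGw : (Pi.single j (δ : ℝ)) ⬝ᵥ G.mulVec (Pi.single j (δ : ℝ)) = δ ^ 2 * G j j := by
      rw [mulVec_single, single_dotProduct]
      simp only [Pi.smul_apply, col_apply, op_smul_eq_mul]; ring
    have hzw : z ⬝ᵥ (Pi.single j (δ : ℝ)) = z j * δ := dotProduct_single _ _ _
    rw [hf]
    simp only [hcast]
    rw [mulVec_add, dotProduct_add, add_dotProduct, add_dotProduct, dotProduct_add,
      huGw, hwGu, hwGw, hzw, ← hu]
    ring
  have hnn : ∀ δ : ℤ, 0 ≤ 2 * δ * (G j j * a j + S) + δ ^ 2 * G j j - 2 * δ * z j := by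
    intro δ
    rw [← hdiff δ]
    have := hmin (Function.update a j (a j + δ))
    linarith
  have h1 := hnn 1
  have h2 := hnn (-1)
  have := near_aux (G j j) (z j - S) (a j) hGjj (by push_cast at h1 ⊢; nlinarith)
    (by push_cast at h2 ⊢; nlinarith)
  exact this
end

section
/- Let h ∈ ℝⁿ and P > 0, and set G = I - (P/(1+P‖h‖²)) h hᵀ. Then G is positive definite, is of the form I - α v vᵀ with v = h/‖h‖ (when h ≠ 0) and α = P‖h‖²/(1+P‖h‖²) ∈ [0,1), and its smallest eigenvalue is 1/(1+P‖h‖²). Consequently any minimizer a* of aᵀ G a over ℤⁿ \ {0} satisfies ‖a*‖ ≤ √(1 + P‖h‖²). -/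
open Matrix BigOperators

theorem stmt_15 {n : ℕ} (hn : 0 < n) (h : Fin n → ℝ) (P : ℝ) (hP : 0 < P)
    (s : ℝ) (hs : s = ∑ i, h i ^ 2)
    (G : Matrix (Fin n) (Fin n) ℝ)
    (hG : G = 1 - (P / (1 + P * s)) • Matrix.vecMulVec h h) :
    G.PosDef ∧
    (h ≠ 0 →
      G = 1 - (P * s / (1 + P * s)) •
        Matrix.vecMulVec (fun i => h i / Real.sqrt s) (fun i => h i / Real.sqrt s) ∧
      0 ≤ P * s / (1 + P * s) ∧ P * s / (1 + P * s) < 1) ∧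
    (∀ hpd : G.PosDef,
      (∀ i, 1 / (1 + P * s) ≤ hpd.1.eigenvalues i) ∧
      (∃ i, hpd.1.eigenvalues i = 1 / (1 + P * s))) ∧
    (∀ a : Fin n → ℤ, a ≠ 0 →
      (∀ b : Fin n → ℤ, b ≠ 0 →
        (fun i => (a i : ℝ)) ⬝ᵥ G.mulVec (fun i => (a i : ℝ)) ≤
        (fun i => (b i : ℝ)) ⬝ᵥ G.mulVec (fun i => (b i : ℝ))) →
      Real.sqrt (∑ i, (a i : ℝ) ^ 2) ≤ Real.sqrt (1 + P * s)) := by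
  have hs0 : 0 ≤ s := hs ▸ Finset.sum_nonneg fun i _ => sq_nonneg _
  have hQ : 0 < 1 + P * s := by nlinarith
  -- quadratic form computation
  have hvmv : ∀ x : Fin n → ℝ,
      x ⬝ᵥ (Matrix.vecMulVec h h).mulVec x = (∑ i, h i * x i) ^ 2 := by
    intro x
    simp only [Matrix.mulVec, Matrix.vecMulVec_apply, dotProduct, sq]
    rw [Finset.sum_mul_sum]
    exact Finset.sum_congr rfl fun i _ => by
      rw [Finset.mul_sum]; exact Finset.sum_congr rfl fun j _ => by ring
  have hquad : ∀ x : Fin n → ℝ,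
      x ⬝ᵥ G.mulVec x = (∑ i, x i ^ 2) - (P / (1 + P * s)) * (∑ i, h i * x i) ^ 2 := by
    intro x
    rw [hG, Matrix.sub_mulVec, dotProduct_sub, Matrix.one_mulVec,
      Matrix.smul_mulVec, dotProduct_smul, hvmv, smul_eq_mul]
    congr 1
    simp [dotProduct, sq]
  -- key bound
  have hkey : ∀ x : Fin n → ℝ,
      (1 / (1 + P * s)) * (∑ i, x i ^ 2) ≤ x ⬝ᵥ G.mulVec x := by
    intro x
    rw [hquad]
    have hcs : (∑ i, h i * x i) ^ 2 ≤ s * ∑ i, x i ^ 2 := by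
      rw [hs]; exact Finset.sum_mul_sq_le_sq_mul_sq _ _ _
    have hx0 : 0 ≤ ∑ i, x i ^ 2 := Finset.sum_nonneg fun i _ => sq_nonneg _
    have hcT : (P / (1 + P * s)) * (∑ i, h i * x i) ^ 2 ≤
        (P / (1 + P * s)) * (s * ∑ i, x i ^ 2) :=
      mul_le_mul_of_nonneg_left hcs (by positivity)
    have hone : (1 / (1 + P * s)) * (∑ i, x i ^ 2) +
        (P / (1 + P * s)) * (s * ∑ i, x i ^ 2) = ∑ i, x i ^ 2 := by
      field_simp
    linarith
  have hsym : G.IsHermitian := by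
    rw [hG]
    refine Matrix.IsHermitian.sub Matrix.isHermitian_one ?_
    rw [Matrix.IsHermitian]
    ext i j
    simp [Matrix.conjTranspose_apply, Matrix.vecMulVec_apply, mul_comm]
  have hpdG : G.PosDef := by
    refine Matrix.PosDef.of_dotProduct_mulVec_pos hsym fun x hx => ?_
    have hx0 : 0 < ∑ i, x i ^ 2 := by
      rcases Function.ne_iff.mp hx with ⟨i, hi⟩
      exact Finset.sum_pos' (fun j _ => sq_nonneg _) ⟨i, Finset.mem_univ i, sq_pos_of_ne_zero hi⟩
    have := hkey x
    have hstar : star x = x := rfl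
    rw [hstar]
    have : 0 < (1 / (1 + P * s)) * (∑ i, x i ^ 2) := by positivity
    linarith [hkey x]
  refine ⟨hpdG, ?_, ?_, ?_⟩
  · -- normalized form
    intro hne
    have hspos : 0 < s := by
      rcases Function.ne_iff.mp hne with ⟨i, hi⟩
      rw [hs]
      exact Finset.sum_pos' (fun j _ => sq_nonneg _) ⟨i, Finset.mem_univ i, sq_pos_of_ne_zero hi⟩
    have hsq : Real.sqrt s * Real.sqrt s = s := Real.mul_self_sqrt hs0
    have hsqrt_ne : Real.sqrt s ≠ 0 := by positivity
    refine ⟨?_, by positivity, ?_⟩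
    · rw [hG]
      congr 1
      ext i j
      simp only [Matrix.smul_apply, Matrix.vecMulVec_apply, smul_eq_mul]
      field_simp
      rw [Real.sq_sqrt hs0]
      ring
    · rw [div_lt_one hQ]; linarith
  · -- eigenvalues
    intro hpd
    have hnorm : ∀ i, ∑ j, (hpd.1.eigenvectorBasis i : Fin n → ℝ) j ^ 2 = 1 := by
      intro i
      have h1 : ‖hpd.1.eigenvectorBasis i‖ = 1 := hpd.1.eigenvectorBasis.orthonormal.1 i
      rw [EuclideanSpace.norm_eq] at h1
      have h2 : 0 ≤ ∑ j, (hpd.1.eigenvectorBasis i : Fin n → ℝ) j ^ 2 :=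
        Finset.sum_nonneg fun j _ => sq_nonneg _
      have h3 := congrArg (· ^ 2) h1
      simp only [Real.norm_eq_abs, sq_abs] at h3
      rw [Real.sq_sqrt (Finset.sum_nonneg fun j _ => sq_nonneg _)] at h3
      simpa using h3
    have heig : ∀ i, hpd.1.eigenvalues i =
        (hpd.1.eigenvectorBasis i : Fin n → ℝ) ⬝ᵥ G.mulVec (hpd.1.eigenvectorBasis i) := by
      intro i
      have := hpd.1.eigenvalues_eq i
      simpa using this
    constructor
    · intro i
      have := hkey (hpd.1.eigenvectorBasis i)
      rw [hnorm i, mul_one] at this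
      rw [heig i]
      exact this
    · -- existence of eigenvalue exactly 1/(1+Ps)
      obtain ⟨v, hv0, hGv⟩ : ∃ v : Fin n → ℝ, v ≠ 0 ∧
          G *ᵥ v = (1 / (1 + P * s)) • v := by
        by_cases hne : h = 0
        · have hs0' : s = 0 := by simp [hs, hne]
          have hG1 : G = 1 := by
            rw [hG, hne]
            ext i j
            simp [Matrix.vecMulVec_apply]
          refine ⟨Pi.single ⟨0, hn⟩ 1, ?_, ?_⟩
          · intro hc
            have := congrFun hc ⟨0, hn⟩
            simp at this
          · rw [hG1, Matrix.one_mulVec, hs0']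
            norm_num
        · refine ⟨h, hne, ?_⟩
          have hvh : (Matrix.vecMulVec h h) *ᵥ h = s • h := by
            funext i
            simp only [Matrix.mulVec, Matrix.vecMulVec_apply, dotProduct,
              Pi.smul_apply, smul_eq_mul, hs]
            rw [Finset.sum_mul]
            exact Finset.sum_congr rfl fun j _ => by ring
          rw [hG, Matrix.sub_mulVec, Matrix.one_mulVec, Matrix.smul_mulVec, hvh]
          funext i
          simp only [Pi.sub_apply, Pi.smul_apply, smul_eq_mul]
          field_simp
          ring
      have hmem : (1 / (1 + P * s)) ∈ spectrum ℝ G := by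
        rw [← AlgEquiv.spectrum_eq (Matrix.toLinAlgEquiv <| Pi.basisFun ℝ (Fin n)) G,
          ← Module.End.hasEigenvalue_iff_mem_spectrum]
        refine Module.End.hasEigenvalue_of_hasEigenvector ⟨?_, hv0⟩
        rw [Module.End.mem_eigenspace_iff, Matrix.toLinAlgEquiv_apply]
        have hrepr : ⇑((Pi.basisFun ℝ (Fin n)).repr v) = v := funext fun i => rfl
        rw [hrepr, hGv]
        funext i
        simp [Finset.sum_apply, Pi.basisFun_apply, Pi.single_apply, mul_ite]
      rw [Matrix.IsHermitian.spectrum_real_eq_range_eigenvalues hpd.1] at hmem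
      exact hmem
  · -- minimizer bound
    intro a ha hmin
    set j : Fin n := ⟨0, hn⟩
    have hb := hmin (Pi.single j 1) (by
      intro hc
      have := congrFun hc j
      simp at this)
    have hbval : (fun i => ((Pi.single j 1 : Fin n → ℤ) i : ℝ)) ⬝ᵥ
        G.mulVec (fun i => ((Pi.single j 1 : Fin n → ℤ) i : ℝ)) ≤ 1 := by
      rw [hquad]
      have h1 : (∑ i, ((Pi.single j 1 : Fin n → ℤ) i : ℝ) ^ 2) = 1 := by
        rw [Finset.sum_eq_single j]
        · simp
        · intro b _ hbj; simp [Pi.single_apply, hbj]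
        · intro hj; exact absurd (Finset.mem_univ j) hj
      have h2 : (∑ i, h i * ((Pi.single j 1 : Fin n → ℤ) i : ℝ)) = h j := by
        rw [Finset.sum_eq_single j]
        · simp
        · intro b _ hbj; simp [Pi.single_apply, hbj]
        · intro hj; exact absurd (Finset.mem_univ j) hj
      rw [h1, h2]
      have : 0 ≤ (P / (1 + P * s)) * h j ^ 2 := by positivity
      linarith
    have hka := hkey (fun i => (a i : ℝ))
    have hle : (1 / (1 + P * s)) * (∑ i, (a i : ℝ) ^ 2) ≤ 1 :=
      le_trans hka (le_trans hb hbval)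
    have hsum : (∑ i, (a i : ℝ) ^ 2) ≤ 1 + P * s := by
      rw [div_mul_eq_mul_div, div_le_iff₀ hQ, one_mul, one_mul] at hle
      exact hle
    exact Real.sqrt_le_sqrt hsum
end

section
/- Let a* minimize aᵀ G a over ℤⁿ \ {0} for a positive-definite matrix G with smallest eigenvalue λ_min and let d_min = min_{a ∈ ℤⁿ\{0}} ‖A a‖ where AᵀA = G. Suppose an algorithm returns â ∈ ℤⁿ achieving ‖A â - y‖² ≤ (1/(1-γ)) min_{a∈ℤⁿ} ‖A a - y‖² for y = A x + z with x ∈ ℤⁿ. If ‖z‖ < d_min / (1 + 1/√(1-γ)), then â = x. -/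
open Matrix BigOperators

lemma norm_eq_sqrt_sum_sq {n : ℕ} (f : EuclideanSpace ℝ (Fin n)) :
    ‖f‖ = Real.sqrt (∑ j, f j ^ 2) := by
  rw [EuclideanSpace.norm_eq]
  congr 1
  refine Finset.sum_congr rfl fun j _ => ?_
  rw [Real.norm_eq_abs, sq_abs]

theorem stmt_18 {n : ℕ} (A : Matrix (Fin n) (Fin n) ℝ) (hA : IsUnit A.det)
    (γ : ℝ) (hγ0 : 0 ≤ γ) (hγ1 : γ < 1)
    (dmin : ℝ)
    (hd : ∀ a : Fin n → ℤ, a ≠ 0 →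
      dmin ≤ Real.sqrt (∑ j, (A.mulVec (fun i => (a i : ℝ)) j) ^ 2))
    (x : Fin n → ℤ) (z : Fin n → ℝ) (y : Fin n → ℝ)
    (hy : y = fun j => A.mulVec (fun i => (x i : ℝ)) j + z j)
    (ah : Fin n → ℤ)
    (happrox : ∀ a : Fin n → ℤ,
      ∑ j, (A.mulVec (fun i => (ah i : ℝ)) j - y j) ^ 2 ≤
      (1 / (1 - γ)) * ∑ j, (A.mulVec (fun i => (a i : ℝ)) j - y j) ^ 2)
    (hz : Real.sqrt (∑ j, z j ^ 2) < dmin / (1 + 1 / Real.sqrt (1 - γ))) :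
    ah = x := by
  by_contra hne
  have h1γ : 0 < 1 - γ := by linarith
  have hs : 0 < Real.sqrt (1 - γ) := Real.sqrt_pos.mpr h1γ
  set r := Real.sqrt (∑ j, z j ^ 2) with hr
  have hr0 : 0 ≤ r := Real.sqrt_nonneg _
  set v : EuclideanSpace ℝ (Fin n) := WithLp.toLp 2 (fun j => A.mulVec (fun i => (ah i : ℝ)) j - y j) with hv
  set w : EuclideanSpace ℝ (Fin n) := WithLp.toLp 2 (fun j => z j) with hw
  -- decomposition
  have hvw : ∀ j, A.mulVec (fun i => ((ah - x) i : ℝ)) j = v j + w j := by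
    intro j
    have hcast : (fun i => ((ah - x) i : ℝ)) = (fun i => (ah i : ℝ)) - (fun i => (x i : ℝ)) := by
      funext i; simp [Pi.sub_apply]
    rw [hcast, Matrix.mulVec_sub]
    simp only [hv, hw, hy, Pi.sub_apply, PiLp.toLp_apply]
    ring
  -- the noise sum
  have hz2 : ∑ j, z j ^ 2 = r ^ 2 := (Real.sq_sqrt (Finset.sum_nonneg fun j _ => sq_nonneg _)).symm
  -- bound on ‖v‖
  have hxres : ∑ j, (A.mulVec (fun i => (x i : ℝ)) j - y j) ^ 2 = ∑ j, z j ^ 2 := by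
    refine Finset.sum_congr rfl fun j _ => ?_
    rw [hy]; ring
  have hv2 : ∑ j, v j ^ 2 ≤ (1 / (1 - γ)) * r ^ 2 := by
    have := happrox x
    rw [hxres, hz2] at this
    exact this
  have hvnorm : ‖v‖ ≤ r / Real.sqrt (1 - γ) := by
    rw [norm_eq_sqrt_sum_sq]
    have h1 : Real.sqrt (∑ j, v j ^ 2) ≤ Real.sqrt ((1 / (1 - γ)) * r ^ 2) :=
      Real.sqrt_le_sqrt hv2
    calc Real.sqrt (∑ j, v j ^ 2) ≤ Real.sqrt ((1 / (1 - γ)) * r ^ 2) := h1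
      _ = Real.sqrt (1 / (1 - γ)) * r := by
          rw [Real.sqrt_mul (by positivity), Real.sqrt_sq hr0]
      _ = r / Real.sqrt (1 - γ) := by
          rw [one_div, Real.sqrt_inv]; ring
  have hwnorm : ‖w‖ = r := by rw [norm_eq_sqrt_sum_sq]
  -- lower bound from lattice
  have hne' : ah - x ≠ 0 := sub_ne_zero.mpr hne
  have hdle : dmin ≤ ‖v + w‖ := by
    have h := hd (ah - x) hne'
    have : ‖v + w‖ = Real.sqrt (∑ j, (A.mulVec (fun i => ((ah - x) i : ℝ)) j) ^ 2) := by
      rw [norm_eq_sqrt_sum_sq]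
      congr 1
      exact Finset.sum_congr rfl fun j _ => by rw [hvw j]; rfl
    rw [this]; exact h
  have htri : ‖v + w‖ ≤ ‖v‖ + ‖w‖ := norm_add_le v w
  have hc : 0 < 1 + 1 / Real.sqrt (1 - γ) := by positivity
  have hmul : r * (1 + 1 / Real.sqrt (1 - γ)) < dmin := (lt_div_iff₀ hc).mp hz
  have : dmin ≤ r * (1 + 1 / Real.sqrt (1 - γ)) := by
    have : dmin ≤ r / Real.sqrt (1 - γ) + r := by
      calc dmin ≤ ‖v + w‖ := hdle
        _ ≤ ‖v‖ + ‖w‖ := htri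
        _ ≤ r / Real.sqrt (1 - γ) + r := by rw [hwnorm]; linarith
    calc dmin ≤ r / Real.sqrt (1 - γ) + r := this
      _ = r * (1 + 1 / Real.sqrt (1 - γ)) := by ring
  linarith
end
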